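/- Let b > 0 and let f(x) = exp(−|x|/b)/(2b) be the density of the centered Laplace distribution with scale b. Then −∫_ℝ f(x) log₂(|x| · f(x)) dx = 1 + (1 + γ)/ln 2, where γ is the Euler–Mascheroni constant. In particular this value does not depend on b. -/

import Mathlib

open Real MeasureTheory

open Set Filter Asymptotics

-- integrability of log * exp on Ioi 0 and value = -γ
lemma mellin_one : MellinConvergent (fun t : ℝ => Real.log t • ((Real.exp (-t) : ℝ) : ℂ)) 1 ∧
    HasDerivAt (mellin fun x : ℝ => ((Real.exp (-x) : ℝ) : ℂ))
      (mellin (fun t : ℝ => Real.log t • ((Real.exp (-t) : ℝ) : ℂ)) 1) 1 := by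
  refine mellin_hasDerivAt_of_isBigO_rpow (a := 2) (b := 0) ?_ ?_ (by norm_num) ?_ (by norm_num)
  · refine (Continuous.continuousOn ?_).locallyIntegrableOn measurableSet_Ioi
    exact Complex.continuous_ofReal.comp (Real.continuous_exp.comp continuous_neg)
  · rw [← isBigO_norm_left]
    simp_rw [Complex.norm_real, isBigO_norm_left]
    simpa only [neg_one_mul] using (isLittleO_exp_neg_mul_rpow_atTop zero_lt_one _).isBigO
  · simp_rw [neg_zero, Real.rpow_zero]
    refine isBigO_const_of_tendsto (?_ : Tendsto _ _ (nhds (1 : ℂ))) one_ne_zero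
    rw [(by simp : (1 : ℂ) = Real.exp (-0))]
    exact (Complex.continuous_ofReal.comp (Real.continuous_exp.comp continuous_neg)).continuousWithinAt

lemma integrableOn_log_exp : IntegrableOn (fun t : ℝ => Real.log t * Real.exp (-t)) (Ioi 0) := by
  have h := mellin_one.1
  rw [MellinConvergent] at h
  have h2 : IntegrableOn (fun t : ℝ => ((Real.log t * Real.exp (-t) : ℝ) : ℂ)) (Ioi 0) := by
    apply h.congr_fun ?_ measurableSet_Ioi
    intro t ht
    simp [Complex.cpow_zero, Complex.ofReal_mul]
  have := h2.re
  simpa [← Complex.ofReal_exp, IntegrableOn] using this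

lemma integral_log_exp : ∫ t : ℝ in Ioi 0, Real.log t * Real.exp (-t)
    = -Real.eulerMascheroniConstant := by
  have hD : HasDerivAt Complex.GammaIntegral
      ((∫ t : ℝ in Ioi 0, Real.log t * Real.exp (-t) : ℝ) : ℂ) 1 := by
    have := Complex.hasDerivAt_GammaIntegral (s := 1) (by norm_num)
    convert this using 2
    have hco : (∫ t : ℝ in Ioi 0, ((Real.log t * Real.exp (-t) : ℝ) : ℂ))
        = ((∫ t : ℝ in Ioi 0, Real.log t * Real.exp (-t) : ℝ) : ℂ) := integral_ofReal
    rw [← hco]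
    refine setIntegral_congr_fun measurableSet_Ioi (fun t ht => ?_)
    simp [Complex.cpow_zero, Complex.ofReal_mul]
  have hre : HasDerivAt (fun x : ℝ => (Complex.GammaIntegral x).re)
      (∫ t : ℝ in Ioi 0, Real.log t * Real.exp (-t)) 1 := by
    simpa using hD.real_of_complex
  have hG : HasDerivAt Real.Gamma (∫ t : ℝ in Ioi 0, Real.log t * Real.exp (-t)) 1 := by
    refine hre.congr_of_eventuallyEq ?_
    filter_upwards [eventually_gt_nhds (by norm_num : (0:ℝ) < 1)] with x hx
    rw [Real.Gamma_eq_integral hx, Complex.GammaIntegral_ofReal, Complex.ofReal_re]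
  exact hG.unique Real.hasDerivAt_Gamma_one

lemma integrableOn_exp_neg : IntegrableOn (fun t : ℝ => Real.exp (-t)) (Ioi 0) := by
  simpa using exp_neg_integrableOn_Ioi 0 (one_pos)

lemma integrableOn_mul_exp_neg : IntegrableOn (fun t : ℝ => t * Real.exp (-t)) (Ioi 0) := by
  have := Real.GammaIntegral_convergent (s := 2) (by norm_num)
  refine this.congr_fun (fun t ht => ?_) measurableSet_Ioi
  beta_reduce
  rw [show (2:ℝ) - 1 = 1 by norm_num, Real.rpow_one, mul_comm]

lemma integral_mul_exp_neg : ∫ t : ℝ in Ioi 0, t * Real.exp (-t) = 1 := by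
  have := Real.Gamma_eq_integral (by norm_num : (0:ℝ) < 2)
  rw [Real.Gamma_two] at this
  rw [this]
  refine setIntegral_congr_fun measurableSet_Ioi (fun t ht => ?_)
  rw [show (2:ℝ) - 1 = 1 by norm_num, Real.rpow_one, mul_comm]

lemma integral_J : ∫ u : ℝ in Ioi 0, Real.exp (-u) * (Real.log u - u - Real.log 2)
    = -Real.eulerMascheroniConstant - 1 - Real.log 2 := by
  have h1 : IntegrableOn (fun u : ℝ => Real.exp (-u) * Real.log u) (Ioi 0) := by
    refine integrableOn_log_exp.congr_fun (fun t ht => mul_comm _ _) measurableSet_Ioi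
  have h2 : IntegrableOn (fun u : ℝ => Real.exp (-u) * u) (Ioi 0) := by
    refine integrableOn_mul_exp_neg.congr_fun (fun t ht => mul_comm _ _) measurableSet_Ioi
  have h3 : IntegrableOn (fun u : ℝ => Real.exp (-u) * Real.log 2) (Ioi 0) :=
    integrableOn_exp_neg.mul_const _
  have : (fun u : ℝ => Real.exp (-u) * (Real.log u - u - Real.log 2))
      = fun u => (Real.exp (-u) * Real.log u - Real.exp (-u) * u) - Real.exp (-u) * Real.log 2 := by
    funext u; ring
  have h12 : IntegrableOn (fun u : ℝ => Real.exp (-u) * Real.log u - Real.exp (-u) * u)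
      (Ioi 0) := h1.sub h2
  rw [this, integral_sub h12 h3, integral_sub h1 h2]
  have e1 : ∫ u : ℝ in Ioi 0, Real.exp (-u) * Real.log u = -Real.eulerMascheroniConstant := by
    rw [← integral_log_exp]
    exact setIntegral_congr_fun measurableSet_Ioi (fun t ht => mul_comm _ _)
  have e2 : ∫ u : ℝ in Ioi 0, Real.exp (-u) * u = 1 := by
    rw [← integral_mul_exp_neg]
    exact setIntegral_congr_fun measurableSet_Ioi (fun t ht => mul_comm _ _)
  have e3 : ∫ u : ℝ in Ioi 0, Real.exp (-u) * Real.log 2 = Real.log 2 := by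
    rw [MeasureTheory.integral_mul_const, integral_exp_neg_Ioi_zero, one_mul]
  rw [e1, e2, e3]

/-- Differential floating-point entropy of the centered Laplace
distribution. -/
theorem fp_entropy_laplace
    (b : ℝ) (hb : 0 < b)
    (f : ℝ → ℝ)
    (hf : ∀ x, f x = Real.exp (-|x| / b) / (2 * b)) :
    -∫ x, f x * Real.logb 2 (|x| * f x)
      = 1 + (1 + Real.eulerMascheroniConstant) / Real.log 2 := by
  have hb' : (2 : ℝ) * b ≠ 0 := by positivity
  have hlog2 : Real.log 2 ≠ 0 := ne_of_gt (Real.log_pos (by norm_num))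
  simp_rw [hf]
  rw [integral_comp_abs (f := fun t : ℝ =>
    Real.exp (-t / b) / (2 * b) * Real.logb 2 (t * (Real.exp (-t / b) / (2 * b))))]
  have hsub := integral_comp_mul_left_Ioi (fun t : ℝ =>
    Real.exp (-t / b) / (2 * b) * Real.logb 2 (t * (Real.exp (-t / b) / (2 * b)))) 0 hb
  rw [mul_zero] at hsub
  have key : ∫ u : ℝ in Ioi 0,
      Real.exp (-(b * u) / b) / (2 * b) * Real.logb 2 (b * u * (Real.exp (-(b * u) / b) / (2 * b)))
      = (1 / (2 * b * Real.log 2)) * (-Real.eulerMascheroniConstant - 1 - Real.log 2) := by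
    rw [← integral_J, ← MeasureTheory.integral_const_mul]
    refine setIntegral_congr_fun measurableSet_Ioi (fun u hu => ?_)
    have hu' : (0:ℝ) < u := hu
    have hbu : -(b * u) / b = -u := by field_simp [mul_comm]
    rw [hbu, Real.logb, Real.log_mul (by positivity) (by positivity),
      Real.log_mul (by positivity) (by positivity), Real.log_div (by positivity) hb',
      Real.log_exp, Real.log_mul two_ne_zero hb.ne']
    field_simp
    all_goals ring
  beta_reduce at hsub
  rw [key, smul_eq_mul] at hsub
  have hF : (∫ x : ℝ in Ioi 0,
      Real.exp (-x / b) / (2 * b) * Real.logb 2 (x * (Real.exp (-x / b) / (2 * b))))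
      = b * (1 / (2 * b * Real.log 2)
        * (-Real.eulerMascheroniConstant - 1 - Real.log 2)) := by
    rw [hsub, ← mul_assoc, mul_inv_cancel₀ hb.ne', one_mul]
  rw [hF]
  field_simp
  ring
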